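/- For every r ∈ [1,+∞), L_r finitely Lipschitz embeds into ℓ_r: there exists A > 0 such that for every finite subset F ⊆ L_r there is a map T_F : F → ℓ_r with (1/A)·‖f−g‖_r ≤ ‖T_F(f)−T_F(g)‖_r ≤ A·‖f−g‖_r for all f,g ∈ F. -/

import Mathlib

open MeasureTheory
open scoped ENNReal

noncomputable section

/-- The sequence space `ℓ_r` of real sequences with summable `r`-th power. -/
abbrev ellSp (r : ℝ) : Type := lp (fun _ : ℕ => ℝ) (ENNReal.ofReal r)

/-- The Lebesgue space `L_r[0,1]` (with respect to Lebesgue measure on `[0,1]`). -/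
abbrev LSp (r : ℝ) : Type :=
  MeasureTheory.Lp ℝ (ENNReal.ofReal r) ((volume : Measure ℝ).restrict (Set.Icc 0 1))

/-- Key step: any finite family of simple functions embeds isometrically into `ℓ_r`,
via the common finite partition they generate. -/
lemma simple_isometry (r : ℝ) (hr : 1 ≤ r) (F : Finset (LSp r))
    (s : LSp r → MeasureTheory.SimpleFunc ℝ ℝ) :
    ∃ T : LSp r → ellSp r, ∀ (f : LSp r) (hf : f ∈ F) (g : LSp r) (hg : g ∈ F),
      ‖T f - T g‖ = (eLpNorm (fun x => s f x - s g x) (ENNReal.ofReal r)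
        ((volume : Measure ℝ).restrict (Set.Icc 0 1))).toReal := by
  classical
  set μ : Measure ℝ := (volume : Measure ℝ).restrict (Set.Icc 0 1) with hμ
  set p : ℝ≥0∞ := ENNReal.ofReal r with hp
  have hr0 : (0:ℝ) < r := lt_of_lt_of_le one_pos hr
  have hp0 : p ≠ 0 := by simp [hp, ENNReal.ofReal_eq_zero]; linarith
  have hpt : p ≠ ∞ := ENNReal.ofReal_ne_top
  have hptr : p.toReal = r := ENNReal.toReal_ofReal hr0.le
  haveI : IsFiniteMeasure μ := by
    constructor
    rw [hμ, Measure.restrict_apply_univ]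
    exact measure_Icc_lt_top
  -- the joint simple function
  have hfib : ∀ v : (↥F → ℝ), MeasurableSet ((fun x (f : ↥F) => s (↑f) x) ⁻¹' {v}) := by
    intro v
    have : ((fun x (f : ↥F) => s (↑f) x) ⁻¹' {v}) = ⋂ f : ↥F, (s ↑f) ⁻¹' {v f} := by
      ext x
      simp [funext_iff]
    rw [this]
    exact MeasurableSet.iInter fun f => (s ↑f).measurableSet_fiber (v f)
  have hrange : (Set.range (fun x (f : ↥F) => s (↑f) x)).Finite := by
    apply Set.Finite.subset (Set.Finite.pi fun f : ↥F => (s ↑f).finite_range)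
    rintro _ ⟨x, rfl⟩
    simp only [Set.mem_pi, Set.mem_univ, forall_true_left]
    intro f
    exact Set.mem_range_self x
  set S : MeasureTheory.SimpleFunc ℝ (↥F → ℝ) := ⟨fun x (f : ↥F) => s (↑f) x, hfib, hrange⟩
    with hS
  set m : ℕ := S.range.card with hm
  set e : Fin m ≃ {v // v ∈ S.range} := S.range.equivFin.symm with he
  set w : (↥F → ℝ) → ℝ := fun v => (μ (S ⁻¹' {v})).toReal ^ (1/r) with hw
  have hwnn : ∀ v, 0 ≤ w v := fun v => Real.rpow_nonneg ENNReal.toReal_nonneg _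
  -- the sequences
  set y : (f : LSp r) → f ∈ F → (ℕ → ℝ) := fun f hf n =>
    if hn : n < m then ((e ⟨n, hn⟩ : ↥F → ℝ)) ⟨f, hf⟩ * w (e ⟨n, hn⟩) else 0 with hy
  have hymem : ∀ (f : LSp r) (hf : f ∈ F), Memℓp (y f hf) p := by
    intro f hf
    apply memℓp_gen
    apply summable_of_ne_finset_zero (s := Finset.range m)
    intro n hn
    rw [Finset.mem_range] at hn
    show ‖y f hf n‖ ^ p.toReal = 0
    rw [hptr]
    simp only [hy, dif_neg hn, norm_zero]
    exact Real.zero_rpow (ne_of_gt hr0)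
  set T : LSp r → ellSp r := fun f => if hf : f ∈ F then ⟨y f hf, hymem f hf⟩ else 0 with hT
  refine ⟨T, ?_⟩
  intro f hf g hg
  have hTf : ∀ n, ((T f - T g : ellSp r) : ℕ → ℝ) n = y f hf n - y g hg n := by
    intro n
    have : ((T f - T g : ellSp r) : ℕ → ℝ) = ((T f : ℕ → ℝ) - (T g : ℕ → ℝ)) :=
      lp.coeFn_sub _ _
    rw [this]
    simp only [hT, dif_pos hf, dif_pos hg, Pi.sub_apply]
  -- LHS power r
  have hl : ‖T f - T g‖ ^ r
      = ∑ v ∈ S.range, ‖v ⟨f, hf⟩ - v ⟨g, hg⟩‖ ^ r * (μ (S ⁻¹' {v})).toReal := by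
    have h0 : ‖T f - T g‖ ^ p.toReal
        = ∑' n : ℕ, ‖((T f - T g : ellSp r) : ℕ → ℝ) n‖ ^ p.toReal :=
      lp.norm_rpow_eq_tsum (by rw [hptr]; exact hr0) (T f - T g)
    rw [hptr] at h0
    rw [h0]
    have hzero : ∀ n ∉ Finset.range m, ‖((T f - T g : ellSp r) : ℕ → ℝ) n‖ ^ r = 0 := by
      intro n hn
      rw [Finset.mem_range] at hn
      rw [hTf n]
      simp [hy, dif_neg hn, Real.zero_rpow (ne_of_gt hr0)]
    rw [tsum_eq_sum hzero]
    rw [← Fin.sum_univ_eq_sum_range (fun n => ‖((T f - T g : ellSp r) : ℕ → ℝ) n‖ ^ r) m]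
    have hterm : ∀ k : Fin m, ‖((T f - T g : ellSp r) : ℕ → ℝ) (k : ℕ)‖ ^ r
        = ‖(e k : ↥F → ℝ) ⟨f, hf⟩ - (e k : ↥F → ℝ) ⟨g, hg⟩‖ ^ r
          * (μ (S ⁻¹' {(e k : ↥F → ℝ)})).toReal := by
      intro k
      rw [hTf]
      simp only [hy, dif_pos k.isLt, Fin.eta]
      rw [← sub_mul, Real.norm_eq_abs, abs_mul, abs_of_nonneg (hwnn _),
        Real.mul_rpow (abs_nonneg _) (hwnn _), hw]
      rw [← Real.rpow_mul ENNReal.toReal_nonneg,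
        one_div_mul_cancel (ne_of_gt hr0), Real.rpow_one, Real.norm_eq_abs]
    rw [Finset.sum_congr rfl (fun k _ => hterm k)]
    rw [Equiv.sum_comp e (fun v : {v // v ∈ S.range} =>
      ‖(v : ↥F → ℝ) ⟨f, hf⟩ - (v : ↥F → ℝ) ⟨g, hg⟩‖ ^ r * (μ (S ⁻¹' {(v : ↥F → ℝ)})).toReal)]
    rw [← Finset.sum_attach S.range (fun v =>
      ‖v ⟨f, hf⟩ - v ⟨g, hg⟩‖ ^ r * (μ (S ⁻¹' {v})).toReal)]
    rfl
  -- RHS power r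
  have hfin : ∀ v ∈ S.range,
      ((‖v ⟨f, hf⟩ - v ⟨g, hg⟩‖₊ : ℝ≥0∞) ^ r) * μ (S ⁻¹' {v}) ≠ ∞ := by
    intro v _
    exact ENNReal.mul_ne_top
      (ENNReal.rpow_lt_top_of_nonneg hr0.le ENNReal.coe_ne_top).ne
      (measure_ne_top μ _)
  have hrhs : (eLpNorm (fun x => s f x - s g x) p μ).toReal ^ r
      = ∑ v ∈ S.range, ‖v ⟨f, hf⟩ - v ⟨g, hg⟩‖ ^ r * (μ (S ⁻¹' {v})).toReal := by
    rw [eLpNorm_eq_lintegral_rpow_enorm_toReal hp0 hpt, hptr]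
    change ((∫⁻ x, (‖s f x - s g x‖₊ : ℝ≥0∞) ^ r ∂μ) ^ (1 / r)).toReal ^ r = _
    have hLeq : (∫⁻ x, (‖s f x - s g x‖₊ : ℝ≥0∞) ^ r ∂μ)
        = ∑ v ∈ S.range, ((‖v ⟨f, hf⟩ - v ⟨g, hg⟩‖₊ : ℝ≥0∞) ^ r) * μ (S ⁻¹' {v}) := by
      have : (fun x => (‖s f x - s g x‖₊ : ℝ≥0∞) ^ r)
          = fun x => (S.map (fun v : ↥F → ℝ => (‖v ⟨f, hf⟩ - v ⟨g, hg⟩‖₊ : ℝ≥0∞) ^ r)) x := by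
        funext x
        rfl
      rw [this, SimpleFunc.lintegral_eq_lintegral, SimpleFunc.map_lintegral]
    rw [hLeq]
    rw [ENNReal.toReal_rpow, ← ENNReal.rpow_mul,
      one_div_mul_cancel (ne_of_gt hr0), ENNReal.rpow_one]
    rw [ENNReal.toReal_sum hfin]
    refine Finset.sum_congr rfl fun v _ => ?_
    rw [ENNReal.toReal_mul, ← ENNReal.toReal_rpow, ENNReal.coe_toReal, coe_nnnorm]
  have hinj := Real.rpow_left_injOn (x := r) (ne_of_gt hr0)
  have hm1 : ‖T f - T g‖ ∈ {y : ℝ | 0 ≤ y} := Set.mem_setOf.2 (lp.norm_nonneg' _)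
  have hm2 : (eLpNorm (fun x => s f x - s g x) p μ).toReal ∈ {y : ℝ | 0 ≤ y} :=
    Set.mem_setOf.2 ENNReal.toReal_nonneg
  exact hinj hm1 hm2 (by simpa using hl.trans hrhs.symm)

theorem Lr_finitely_lipschitz_embeds_ellr (r : ℝ) (hr : 1 ≤ r) :
    ∃ A : ℝ, 0 < A ∧ ∀ F : Finset (LSp r), ∃ T : LSp r → ellSp r,
      ∀ f ∈ F, ∀ g ∈ F,
        (1/A) * ‖f - g‖ ≤ ‖T f - T g‖ ∧ ‖T f - T g‖ ≤ A * ‖f - g‖ := by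
  classical
  set μ : Measure ℝ := (volume : Measure ℝ).restrict (Set.Icc 0 1) with hμ
  set p : ℝ≥0∞ := ENNReal.ofReal r with hp
  have hr0 : (0:ℝ) < r := lt_of_lt_of_le one_pos hr
  have hpt : p ≠ ∞ := ENNReal.ofReal_ne_top
  haveI : Fact (1 ≤ p) := ⟨by rw [hp, ← ENNReal.ofReal_one]; exact ENNReal.ofReal_le_ofReal hr⟩
  refine ⟨2, by norm_num, ?_⟩
  intro F
  -- minimal positive distance
  set D : Finset ℝ := ((F ×ˢ F).filter fun q => q.1 ≠ q.2).image (fun q => ‖q.1 - q.2‖) with hD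
  set ε : ℝ := if hne : D.Nonempty then D.min' hne / 4 else 1 with hε
  have hDpos : ∀ x ∈ D, 0 < x := by
    intro x hx
    rw [hD, Finset.mem_image] at hx
    obtain ⟨q, hq, rfl⟩ := hx
    rw [Finset.mem_filter] at hq
    exact norm_pos_iff.2 (sub_ne_zero.2 hq.2)
  have hεpos : 0 < ε := by
    rw [hε]
    split
    · next hne => linarith [hDpos _ (D.min'_mem hne)]
    · norm_num
  -- choose simple approximants
  have happrox : ∀ f : LSp r, ∃ sf : Lp.simpleFunc ℝ p μ, ‖f - (sf : LSp r)‖ < ε := by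
    intro f
    have hdense := Lp.simpleFunc.denseRange (E := ℝ) (μ := μ) (p := p) hpt
    obtain ⟨b, hbmem, hbd⟩ := Metric.mem_closure_iff.1 (hdense f) ε hεpos
    obtain ⟨sf, rfl⟩ := hbmem
    exact ⟨sf, by rwa [← dist_eq_norm]⟩
  choose gf hgf using happrox
  obtain ⟨T, hTiso⟩ := simple_isometry r hr F
    (fun f => Lp.simpleFunc.toSimpleFunc (gf f))
  refine ⟨T, ?_⟩
  intro f hf g hg
  -- identify ‖T f - T g‖ with the Lp-norm of the difference of approximants
  have hae : ∀ f : LSp r, (fun x => (Lp.simpleFunc.toSimpleFunc (gf f)) x)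
      =ᵐ[μ] fun x => (((gf f : LSp r)) : ℝ → ℝ) x :=
    fun f => Lp.simpleFunc.toSimpleFunc_eq_toFun (gf f)
  have hnormTfg : ‖T f - T g‖ = ‖(gf f : LSp r) - (gf g : LSp r)‖ := by
    rw [hTiso f hf g hg, Lp.norm_def]
    congr 1
    apply eLpNorm_congr_ae
    filter_upwards [hae f, hae g,
      Lp.coeFn_sub ((gf f : LSp r)) ((gf g : LSp r))] with x h1 h2 h3
    rw [h1, h2, ← Pi.sub_apply, ← h3]
  by_cases hfg : f = g
  · subst hfg
    simp [hnormTfg]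
  · have hδ : 4 * ε ≤ ‖f - g‖ := by
      have hmem : ‖f - g‖ ∈ D := by
        rw [hD, Finset.mem_image]
        exact ⟨(f, g), Finset.mem_filter.2 ⟨Finset.mem_product.2 ⟨hf, hg⟩, hfg⟩, rfl⟩
      have hne : D.Nonempty := ⟨_, hmem⟩
      have := D.min'_le _ hmem
      rw [hε, dif_pos hne]
      linarith
    have t1 := dist_triangle4 ((gf f : LSp r)) f g ((gf g : LSp r))
    have t2 := dist_triangle4 f ((gf f : LSp r)) ((gf g : LSp r)) g
    simp only [dist_eq_norm] at t1 t2
    have e1 : ‖(gf f : LSp r) - f‖ = ‖f - (gf f : LSp r)‖ := norm_sub_rev _ _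
    have e4 : ‖(gf g : LSp r) - g‖ = ‖g - (gf g : LSp r)‖ := norm_sub_rev _ _
    have e2 := hgf f
    have e3 := hgf g
    have h1 : ‖(gf f : LSp r) - (gf g : LSp r)‖ ≤ ‖f - g‖ + 2 * ε := by linarith
    have h2 : ‖f - g‖ ≤ ‖(gf f : LSp r) - (gf g : LSp r)‖ + 2 * ε := by linarith
    constructor
    · rw [hnormTfg]; linarith
    · rw [hnormTfg]; linarith
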